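/- Let H = (H_p)_{p in G} and H' = (H'_p)_{p in G} be G-cograded Hopf coquasigroups, let R = (H_p[y_p; τ_p, δ_p]) be a group-cograded Hopf coquasigroup-Ore extension of H with Δ_{p,q}(y_{pq}) = y_p ⊗ 1_q + r_p ⊗ y_q for elements r_p in H_p, and let R' = (H'_p[y'_p; τ'_p, δ'_p]) be a group-cograded Hopf coquasigroup-Ore extension of H' with Δ'_{p,q}(y'_{pq}) = y'_p ⊗ 1_q + r'_p ⊗ y'_q for elements r'_p in H'_p. Suppose φ = (φ_p : H_p → H'_p)_{p in G} is an isomorphism of G-cograded Hopf coquasigroups (a family of k-algebra isomorphisms with (φ_p ⊗ φ_q)∘Δ_{p,q} = Δ'_{p,q}∘φ_{pq}, ε'∘φ_1 = ε, and S'_p∘φ_p = φ_{p⁻¹}∘S_p) such that φ_p(r_p) = r'_p and τ'_p∘φ_p = φ_p∘τ_p for all p, and suppose there exists a family of elements d_p in H'_p with Δ'_{p,q}(d_{pq}) = d_p ⊗ 1_q + r'_p ⊗ d_q for all p,q and δ'_p(φ_p(h)) = φ_p(δ_p(h)) + φ_p(τ_p(h))·d_p − d_p·φ_p(h) for all h in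 H_p. Then there exists a family of k-algebra isomorphisms φ̄_p : R_p → R'_p extending φ_p with φ̄_p(y_p) = y'_p + d_p and (φ̄_p ⊗ φ̄_q)∘Δ_{p,q} = Δ'_{p,q}∘φ̄_{pq} for all p,q in G; in particular R is isomorphic to R'. -/

import Mathlib

open scoped TensorProduct

section Preliminaries

variable (k : Type*) [Field k] {G : Type*} [Group G]

/-- Transport along an equality of group indices, as a `k`-linear map. -/
def lcast {H : G → Type*} [∀ p, AddCommMonoid (H p)] [∀ p, Module k (H p)]
    {p q : G} (e : p = q) : H p →ₗ[k] H q where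
  toFun h := e ▸ h
  map_add' := by subst e; intros; rfl
  map_smul' := by subst e; intros; rfl

/-- A `G`-cograded Hopf coquasigroup over the field `k`. -/
structure GCHCQG (H : G → Type*) [∀ p, Ring (H p)] [∀ p, Algebra k (H p)] where
  /-- the comultiplication, a family of algebra maps `Δ_{p,q} : H_{pq} → H_p ⊗ H_q` -/
  Δ : ∀ p q : G, H (p * q) →ₐ[k] (H p ⊗[k] H q)
  /-- the counit -/
  ε : H 1 →ₐ[k] k
  /-- the antipode, a family of `k`-linear anti-homomorphisms `S_p : H_p → H_{p⁻¹}` -/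
  S : ∀ p : G, H p →ₗ[k] H p⁻¹
  S_one : ∀ p : G, S p (1 : H p) = 1
  S_mul : ∀ (p : G) (a b : H p), S p (a * b) = S p b * S p a
  /-- `(ε ⊗ id)Δ_{1,p} = id` -/
  counit_left : ∀ (p : G) (h : H (1 * p)),
    TensorProduct.lid k (H p)
      (TensorProduct.map ε.toLinearMap LinearMap.id (Δ 1 p h))
      = lcast k (one_mul p) h
  /-- `(id ⊗ ε)Δ_{p,1} = id` -/
  counit_right : ∀ (p : G) (h : H (p * 1)),
    TensorProduct.rid k (H p)
      (TensorProduct.map LinearMap.id ε.toLinearMap (Δ p 1 h))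
      = lcast k (mul_one p) h
  /-- `S_{q⁻¹}(h_(1,q⁻¹))h_(21,q) ⊗ h_(22,p) = 1_q ⊗ h` -/
  antipode_1 : ∀ (p q : G) (h : H (q⁻¹ * (q * p))),
    TensorProduct.map (LinearMap.mul' k (H q)) LinearMap.id
      (TensorProduct.map
        (TensorProduct.map ((lcast k (inv_inv q)).comp (S q⁻¹)) LinearMap.id)
        LinearMap.id
        ((TensorProduct.assoc k (H q⁻¹) (H q) (H p)).symm
          (TensorProduct.map LinearMap.id (Δ q p).toLinearMap
            (Δ q⁻¹ (q * p) h))))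
      = (1 : H q) ⊗ₜ[k] lcast k (inv_mul_cancel_left q p) h
  /-- `h_(1,q)S_{q⁻¹}(h_(21,q⁻¹)) ⊗ h_(22,p) = 1_q ⊗ h` -/
  antipode_2 : ∀ (p q : G) (h : H (q * (q⁻¹ * p))),
    TensorProduct.map (LinearMap.mul' k (H q)) LinearMap.id
      (TensorProduct.map
        (TensorProduct.map LinearMap.id ((lcast k (inv_inv q)).comp (S q⁻¹)))
        LinearMap.id
        ((TensorProduct.assoc k (H q) (H q⁻¹) (H p)).symm
          (TensorProduct.map LinearMap.id (Δ q⁻¹ p).toLinearMap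
            (Δ q (q⁻¹ * p) h))))
      = (1 : H q) ⊗ₜ[k] lcast k (mul_inv_cancel_left q p) h
  /-- `h_(11,p) ⊗ h_(12,q)S_{q⁻¹}(h_(2,q⁻¹)) = h ⊗ 1_q` -/
  antipode_3 : ∀ (p q : G) (h : H ((p * q) * q⁻¹)),
    TensorProduct.map LinearMap.id (LinearMap.mul' k (H q))
      (TensorProduct.map LinearMap.id
        (TensorProduct.map LinearMap.id ((lcast k (inv_inv q)).comp (S q⁻¹)))
        ((TensorProduct.assoc k (H p) (H q) (H q⁻¹))
          (TensorProduct.map (Δ p q).toLinearMap LinearMap.id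
            (Δ (p * q) q⁻¹ h))))
      = lcast k (mul_inv_cancel_right p q) h ⊗ₜ[k] (1 : H q)
  /-- `h_(11,p) ⊗ S_{q⁻¹}(h_(12,q⁻¹))h_(2,q) = h ⊗ 1_q` -/
  antipode_4 : ∀ (p q : G) (h : H ((p * q⁻¹) * q)),
    TensorProduct.map LinearMap.id (LinearMap.mul' k (H q))
      (TensorProduct.map LinearMap.id
        (TensorProduct.map ((lcast k (inv_inv q)).comp (S q⁻¹)) LinearMap.id)
        ((TensorProduct.assoc k (H p) (H q⁻¹) (H q))
          (TensorProduct.map (Δ p q⁻¹).toLinearMap LinearMap.id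
            (Δ (p * q⁻¹) q h))))
      = lcast k (inv_mul_cancel_right p q) h ⊗ₜ[k] (1 : H q)

/-- A realization of the Ore extension `A[y; τ, δ]` : a `k`-algebra `R` containing `A`
(via `ι`), free as a left `A`-module with basis `{yⁿ}`, with `y·a = τ(a)y + δ(a)`. -/
structure OreData (A R : Type*) [Ring A] [Algebra k A] [Ring R] [Algebra k R]
    (τ : A →ₐ[k] A) (δ : A →ₗ[k] A) where
  ι : A →ₐ[k] R
  y : R
  rel : ∀ a : A, y * ι a = ι (τ a) * y + ι (δ a)
  free : ∀ f : ℕ →₀ A, (f.sum fun n a => ι a * y ^ n) = 0 → f = 0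
  span : ∀ x : R, ∃ f : ℕ →₀ A, x = f.sum fun n a => ι a * y ^ n

/-- A group-cograded Hopf coquasigroup-Ore extension of `H` : the family
`R_p = H_p[y_p; τ_p, δ_p]` carrying a `G`-cograded Hopf coquasigroup structure
whose structure maps restrict on the subalgebras `H_p` to those of `H`. -/
structure GCHCQGOreExt {H : G → Type*} [∀ p, Ring (H p)] [∀ p, Algebra k (H p)]
    (HH : GCHCQG k H)
    (R : G → Type*) [∀ p, Ring (R p)] [∀ p, Algebra k (R p)]
    (τ : ∀ p : G, H p →ₐ[k] H p) (δ : ∀ p : G, H p →ₗ[k] H p) where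
  RR : GCHCQG k R
  ore : ∀ p : G, OreData k (H p) (R p) (τ p) (δ p)
  deriv : ∀ (p : G) (a b : H p), δ p (a * b) = δ p a * b + τ p a * δ p b
  compat_Δ : ∀ (p q : G) (h : H (p * q)),
    RR.Δ p q ((ore (p * q)).ι h)
      = TensorProduct.map ((ore p).ι).toLinearMap ((ore q).ι).toLinearMap (HH.Δ p q h)
  compat_ε : ∀ h : H (1 : G), RR.ε ((ore 1).ι h) = HH.ε h
  compat_S : ∀ (p : G) (h : H p), RR.S p ((ore p).ι h) = (ore p⁻¹).ι (HH.S p h)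

/-- A Hopf coquasigroup over the field `k`. -/
structure HopfCoquasigroup (H : Type*) [Ring H] [Algebra k H] where
  Δ : H →ₐ[k] H ⊗[k] H
  ε : H →ₐ[k] k
  S : H →ₗ[k] H
  counit_left : ∀ h : H,
    TensorProduct.lid k H (TensorProduct.map ε.toLinearMap LinearMap.id (Δ h)) = h
  counit_right : ∀ h : H,
    TensorProduct.rid k H (TensorProduct.map LinearMap.id ε.toLinearMap (Δ h)) = h
  antipode_1 : ∀ h : H,
    TensorProduct.map (LinearMap.mul' k H) LinearMap.id
      (TensorProduct.map (TensorProduct.map S LinearMap.id) LinearMap.id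
        ((TensorProduct.assoc k H H H).symm
          (TensorProduct.map LinearMap.id Δ.toLinearMap (Δ h))))
      = (1 : H) ⊗ₜ[k] h
  antipode_2 : ∀ h : H,
    TensorProduct.map (LinearMap.mul' k H) LinearMap.id
      (TensorProduct.map (TensorProduct.map LinearMap.id S) LinearMap.id
        ((TensorProduct.assoc k H H H).symm
          (TensorProduct.map LinearMap.id Δ.toLinearMap (Δ h))))
      = (1 : H) ⊗ₜ[k] h
  antipode_3 : ∀ h : H,
    TensorProduct.map LinearMap.id (LinearMap.mul' k H)
      (TensorProduct.map LinearMap.id (TensorProduct.map S LinearMap.id)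
        ((TensorProduct.assoc k H H H)
          (TensorProduct.map Δ.toLinearMap LinearMap.id (Δ h))))
      = h ⊗ₜ[k] (1 : H)
  antipode_4 : ∀ h : H,
    TensorProduct.map LinearMap.id (LinearMap.mul' k H)
      (TensorProduct.map LinearMap.id (TensorProduct.map LinearMap.id S)
        ((TensorProduct.assoc k H H H)
          (TensorProduct.map Δ.toLinearMap LinearMap.id (Δ h))))
      = h ⊗ₜ[k] (1 : H)

end Preliminaries
section OreLift

variable {k : Type*} [Field k] {A RA T : Type*} [Ring A] [Algebra k A]
  [Ring RA] [Algebra k RA] [Ring T] [Algebra k T]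
  {τ : A →ₐ[k] A} {δ : A →ₗ[k] A}

/-- Evaluation of a polynomial-coefficient family at an algebra map and element. -/
noncomputable def oreEval (f : A →ₐ[k] T) (Y : T) : (ℕ →₀ A) →ₗ[k] T :=
  Finsupp.lsum k fun n => (LinearMap.mulRight k (Y ^ n)).comp f.toLinearMap

lemma oreEval_single (f : A →ₐ[k] T) (Y : T) (n : ℕ) (a : A) :
    oreEval f Y (Finsupp.single n a) = f a * Y ^ n := by
  simp [oreEval]

lemma oreEval_apply (f : A →ₐ[k] T) (Y : T) (g : ℕ →₀ A) :
    oreEval f Y g = g.sum fun n a => f a * Y ^ n := by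
  simp [oreEval, Finsupp.lsum_apply, Finsupp.sum]

lemma oreEval_bijective (o : OreData k A RA τ δ) :
    Function.Bijective (oreEval o.ι o.y) := by
  constructor
  · intro g1 g2 h
    have : oreEval o.ι o.y (g1 - g2) = 0 := by rw [map_sub, h, sub_self]
    have h2 := o.free (g1 - g2) (by rw [← oreEval_apply]; exact this)
    exact sub_eq_zero.mp h2
  · intro x
    obtain ⟨g, hg⟩ := o.span x
    exact ⟨g, by rw [oreEval_apply, ← hg]⟩

/-- Induction principle for Ore extensions. -/
lemma OreData.ind (o : OreData k A RA τ δ) {P : RA → Prop} (h0 : P 0)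
    (hadd : ∀ x y, P x → P y → P (x + y))
    (hb : ∀ (n : ℕ) (a : A), P (o.ι a * o.y ^ n)) (x : RA) : P x := by
  obtain ⟨g, rfl⟩ := (oreEval_bijective o).2 x
  induction g using Finsupp.induction with
  | zero => simpa using h0
  | single_add n a g _ _ ih =>
    rw [map_add, oreEval_single]
    exact hadd _ _ (hb n a) ih

/-- The linear lift of `a ↦ f a`, `y ↦ Y` to the Ore extension. -/
noncomputable def oreLift (o : OreData k A RA τ δ) (f : A →ₐ[k] T) (Y : T) :
    RA →ₗ[k] T :=
  (oreEval f Y).comp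
    (LinearEquiv.ofBijective (oreEval o.ι o.y) (oreEval_bijective o)).symm.toLinearMap

lemma oreLift_eval (o : OreData k A RA τ δ) (f : A →ₐ[k] T) (Y : T) (g : ℕ →₀ A) :
    oreLift o f Y (oreEval o.ι o.y g) = oreEval f Y g := by
  have : (LinearEquiv.ofBijective (oreEval o.ι o.y) (oreEval_bijective o)).symm
      (oreEval o.ι o.y g) = g := by
    apply (LinearEquiv.ofBijective (oreEval o.ι o.y) (oreEval_bijective o)).injective
    simp [LinearEquiv.ofBijective_apply]
  simp [oreLift, this]

lemma oreLift_basis (o : OreData k A RA τ δ) (f : A →ₐ[k] T) (Y : T) (n : ℕ) (a : A) :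
    oreLift o f Y (o.ι a * o.y ^ n) = f a * Y ^ n := by
  rw [← oreEval_single o.ι o.y n a, oreLift_eval, oreEval_single]

lemma oreLift_ι (o : OreData k A RA τ δ) (f : A →ₐ[k] T) (Y : T) (a : A) :
    oreLift o f Y (o.ι a) = f a := by
  simpa using oreLift_basis o f Y 0 a

lemma oreLift_y (o : OreData k A RA τ δ) (f : A →ₐ[k] T) (Y : T) :
    oreLift o f Y o.y = Y := by
  simpa using oreLift_basis o f Y 1 1

lemma oreLift_one (o : OreData k A RA τ δ) (f : A →ₐ[k] T) (Y : T) :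
    oreLift o f Y 1 = 1 := by
  simpa using oreLift_basis o f Y 0 1

variable {o : OreData k A RA τ δ} {f : A →ₐ[k] T} {Y : T}

lemma oreLift_y_mul (hrel : ∀ a, Y * f a = f (τ a) * Y + f (δ a)) :
    ∀ x, oreLift o f Y (o.y * x) = Y * oreLift o f Y x := by
  intro x
  induction x using OreData.ind (o := o) with
  | h0 => simp
  | hadd x z hx hz => rw [mul_add, map_add, map_add, hx, hz, mul_add]
  | hb n a =>
    have h1 : o.y * (o.ι a * o.y ^ n)
        = o.ι (τ a) * o.y ^ (n + 1) + o.ι (δ a) * o.y ^ n := by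
      rw [← mul_assoc, o.rel, add_mul, mul_assoc, ← pow_succ']
    rw [h1, map_add, oreLift_basis, oreLift_basis, oreLift_basis, pow_succ',
      ← mul_assoc, ← add_mul, ← hrel, mul_assoc]

lemma oreLift_ι_mul (a : A) :
    ∀ x, oreLift o f Y (o.ι a * x) = f a * oreLift o f Y x := by
  intro x
  induction x using OreData.ind (o := o) with
  | h0 => simp
  | hadd x z hx hz => rw [mul_add, map_add, map_add, hx, hz, mul_add]
  | hb n b =>
    rw [← mul_assoc, ← map_mul, oreLift_basis, oreLift_basis, map_mul, mul_assoc]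

lemma oreLift_pow_mul (hrel : ∀ a, Y * f a = f (τ a) * Y + f (δ a)) (m : ℕ) :
    ∀ x, oreLift o f Y (o.y ^ m * x) = Y ^ m * oreLift o f Y x := by
  induction m with
  | zero => simp
  | succ m ih =>
    intro x
    rw [pow_succ', mul_assoc, oreLift_y_mul hrel, ih, pow_succ', mul_assoc]

lemma oreLift_mul (hrel : ∀ a, Y * f a = f (τ a) * Y + f (δ a)) (z : RA) :
    ∀ x, oreLift o f Y (x * z) = oreLift o f Y x * oreLift o f Y z := by
  intro x
  induction x using OreData.ind (o := o) with
  | h0 => simp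
  | hadd x x' hx hx' => rw [add_mul, map_add, map_add, hx, hx', add_mul]
  | hb n a =>
    rw [mul_assoc, oreLift_ι_mul, oreLift_pow_mul hrel, oreLift_basis, ← mul_assoc,
      mul_assoc]

/-- The algebra lift of `a ↦ f a`, `y ↦ Y` to the Ore extension. -/
noncomputable def oreAlgHom (o : OreData k A RA τ δ) (f : A →ₐ[k] T) (Y : T)
    (hrel : ∀ a, Y * f a = f (τ a) * Y + f (δ a)) : RA →ₐ[k] T :=
  AlgHom.ofLinearMap (oreLift o f Y) (oreLift_one o f Y)
    (fun x z => oreLift_mul hrel z x)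

@[simp] lemma oreAlgHom_ι (o : OreData k A RA τ δ) (f : A →ₐ[k] T) (Y : T)
    (hrel : ∀ a, Y * f a = f (τ a) * Y + f (δ a)) (a : A) :
    oreAlgHom o f Y hrel (o.ι a) = f a := oreLift_ι o f Y a

@[simp] lemma oreAlgHom_y (o : OreData k A RA τ δ) (f : A →ₐ[k] T) (Y : T)
    (hrel : ∀ a, Y * f a = f (τ a) * Y + f (δ a)) :
    oreAlgHom o f Y hrel o.y = Y := oreLift_y o f Y

/-- Two algebra maps out of an Ore extension agreeing on `A` and `y` agree. -/
lemma oreAlgHom_ext (o : OreData k A RA τ δ) (g1 g2 : RA →ₐ[k] T)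
    (hι : ∀ a, g1 (o.ι a) = g2 (o.ι a)) (hy : g1 o.y = g2 o.y) :
    ∀ x, g1 x = g2 x := by
  intro x
  induction x using OreData.ind (o := o) with
  | h0 => simp
  | hadd x z hx hz => rw [map_add, map_add, hx, hz]
  | hb n a => rw [map_mul, map_mul, map_pow, map_pow, hι, hy]

end OreLift

/-- Theorem 4.7: An isomorphism `φ : H → H'` of `G`-cograded Hopf
coquasigroups with `φ_p(r_p) = r'_p`, `τ'_p ∘ φ_p = φ_p ∘ τ_p`, together with elements
`d_p ∈ H'_p` satisfying `Δ'(d_{pq}) = d_p ⊗ 1 + r'_p ⊗ d_q` and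
`δ'_p(φ_p(h)) = φ_p(δ_p(h)) + φ_p(τ_p(h))d_p − d_p φ_p(h)`, extends to an isomorphism
`φ̄ : R → R'` of the Ore extensions with `φ̄_p(y_p) = y'_p + d_p` which is compatible
with the comultiplications; in particular `R ≅ R'`. -/
theorem statement18 (k : Type*) [Field k] {G : Type*} [Group G]
    (H : G → Type*) [∀ p, Ring (H p)] [∀ p, Algebra k (H p)]
    (H' : G → Type*) [∀ p, Ring (H' p)] [∀ p, Algebra k (H' p)]
    (HH : GCHCQG k H) (HH' : GCHCQG k H')
    (R : G → Type*) [∀ p, Ring (R p)] [∀ p, Algebra k (R p)]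
    (R' : G → Type*) [∀ p, Ring (R' p)] [∀ p, Algebra k (R' p)]
    (τ : ∀ p : G, H p →ₐ[k] H p) (δ : ∀ p : G, H p →ₗ[k] H p)
    (τ' : ∀ p : G, H' p →ₐ[k] H' p) (δ' : ∀ p : G, H' p →ₗ[k] H' p)
    (ext : GCHCQGOreExt k HH R τ δ) (ext' : GCHCQGOreExt k HH' R' τ' δ')
    (r : ∀ p : G, H p) (r' : ∀ p : G, H' p)
    (hy : ∀ p q : G,
      ext.RR.Δ p q ((ext.ore (p * q)).y)
        = (ext.ore p).y ⊗ₜ[k] (1 : R q) + (ext.ore p).ι (r p) ⊗ₜ[k] (ext.ore q).y)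
    (hy' : ∀ p q : G,
      ext'.RR.Δ p q ((ext'.ore (p * q)).y)
        = (ext'.ore p).y ⊗ₜ[k] (1 : R' q)
          + (ext'.ore p).ι (r' p) ⊗ₜ[k] (ext'.ore q).y)
    (φ : ∀ p : G, H p ≃ₐ[k] H' p)
    (hφΔ : ∀ (p q : G) (h : H (p * q)),
      TensorProduct.map (φ p).toLinearMap (φ q).toLinearMap (HH.Δ p q h)
        = HH'.Δ p q (φ (p * q) h))
    (hφε : ∀ h : H (1 : G), HH'.ε (φ 1 h) = HH.ε h)
    (hφS : ∀ (p : G) (h : H p), HH'.S p (φ p h) = φ p⁻¹ (HH.S p h))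
    (hφr : ∀ p : G, φ p (r p) = r' p)
    (hφτ : ∀ (p : G) (h : H p), τ' p (φ p h) = φ p (τ p h))
    (d : ∀ p : G, H' p)
    (hd : ∀ p q : G,
      HH'.Δ p q (d (p * q)) = d p ⊗ₜ[k] (1 : H' q) + r' p ⊗ₜ[k] d q)
    (hφδ : ∀ (p : G) (h : H p),
      δ' p (φ p h) = φ p (δ p h) + φ p (τ p h) * d p - d p * φ p h) :
    ∃ ψ : ∀ p : G, R p ≃ₐ[k] R' p,
      (∀ (p : G) (h : H p), ψ p ((ext.ore p).ι h) = (ext'.ore p).ι (φ p h)) ∧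
      (∀ p : G, ψ p ((ext.ore p).y) = (ext'.ore p).y + (ext'.ore p).ι (d p)) ∧
      (∀ (p q : G) (x : R (p * q)),
        TensorProduct.map (ψ p).toLinearMap (ψ q).toLinearMap (ext.RR.Δ p q x)
          = ext'.RR.Δ p q (ψ (p * q) x)) := by
  classical
  -- forward relation
  have hrelF : ∀ (p : G) (a : H p),
      ((ext'.ore p).y + (ext'.ore p).ι (d p))
          * (((ext'.ore p).ι.comp (φ p).toAlgHom) a)
        = ((ext'.ore p).ι.comp (φ p).toAlgHom) (τ p a)
            * ((ext'.ore p).y + (ext'.ore p).ι (d p))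
          + ((ext'.ore p).ι.comp (φ p).toAlgHom) (δ p a) := by
    intro p a
    simp only [AlgHom.comp_apply, AlgEquiv.toAlgHom_eq_coe, AlgHom.coe_coe, AlgEquiv.coe_algHom]
    rw [add_mul, (ext'.ore p).rel, hφτ, hφδ]
    simp only [map_sub, map_add, map_mul, mul_add]
    abel
  -- backward relation
  have hrelB : ∀ (p : G) (b : H' p),
      ((ext.ore p).y - (ext.ore p).ι ((φ p).symm (d p)))
          * (((ext.ore p).ι.comp (φ p).symm.toAlgHom) b)
        = ((ext.ore p).ι.comp (φ p).symm.toAlgHom) (τ' p b)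
            * ((ext.ore p).y - (ext.ore p).ι ((φ p).symm (d p)))
          + ((ext.ore p).ι.comp (φ p).symm.toAlgHom) (δ' p b) := by
    intro p b
    obtain ⟨a, rfl⟩ : ∃ a, b = φ p a := ⟨(φ p).symm b, ((φ p).apply_symm_apply b).symm⟩
    simp only [AlgHom.comp_apply, AlgEquiv.toAlgHom_eq_coe, AlgHom.coe_coe, AlgEquiv.coe_algHom]
    have h1 : (φ p).symm (φ p a) = a := (φ p).symm_apply_apply a
    have h2 : (φ p).symm (τ' p (φ p a)) = τ p a := by
      rw [hφτ]; exact (φ p).symm_apply_apply _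
    have h3 : (φ p).symm (δ' p (φ p a))
        = δ p a + τ p a * (φ p).symm (d p) - (φ p).symm (d p) * a := by
      simp only [hφδ, map_sub, map_add, map_mul, (φ p).symm_apply_apply]
    rw [h1, h2, h3, sub_mul, (ext.ore p).rel]
    simp only [map_sub, map_add, map_mul, mul_sub]
    abel
  set F : ∀ p : G, R p →ₐ[k] R' p := fun p =>
    oreAlgHom (ext.ore p) ((ext'.ore p).ι.comp (φ p).toAlgHom)
      ((ext'.ore p).y + (ext'.ore p).ι (d p)) (hrelF p) with hF
  set B : ∀ p : G, R' p →ₐ[k] R p := fun p =>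
    oreAlgHom (ext'.ore p) ((ext.ore p).ι.comp (φ p).symm.toAlgHom)
      ((ext.ore p).y - (ext.ore p).ι ((φ p).symm (d p))) (hrelB p) with hB
  have hFι : ∀ (p : G) (a : H p), F p ((ext.ore p).ι a) = (ext'.ore p).ι (φ p a) := by
    intro p a; simp [hF]
  have hFy : ∀ p : G, F p ((ext.ore p).y)
      = (ext'.ore p).y + (ext'.ore p).ι (d p) := by
    intro p; simp [hF]
  have hBι : ∀ (p : G) (b : H' p), B p ((ext'.ore p).ι b)
      = (ext.ore p).ι ((φ p).symm b) := by
    intro p b; simp [hB]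
  have hBy : ∀ p : G, B p ((ext'.ore p).y)
      = (ext.ore p).y - (ext.ore p).ι ((φ p).symm (d p)) := by
    intro p; simp [hB]
  have hBF : ∀ (p : G) (x : R p), B p (F p x) = x := by
    intro p
    refine oreAlgHom_ext (ext.ore p) ((B p).comp (F p)) (AlgHom.id k (R p)) ?_ ?_
    · intro a
      simp only [AlgHom.comp_apply, AlgHom.id_apply, hFι, hBι,
        (φ p).symm_apply_apply]
    · simp only [AlgHom.comp_apply, AlgHom.id_apply, hFy, map_add, hBy, hBι]
      abel
  have hFB : ∀ (p : G) (x : R' p), F p (B p x) = x := by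
    intro p
    refine oreAlgHom_ext (ext'.ore p) ((F p).comp (B p)) (AlgHom.id k (R' p)) ?_ ?_
    · intro b
      simp only [AlgHom.comp_apply, AlgHom.id_apply, hBι, hFι,
        (φ p).apply_symm_apply]
    · simp only [AlgHom.comp_apply, AlgHom.id_apply, hBy, map_sub, hFy, hFι,
        (φ p).apply_symm_apply]
      abel
  set ψ : ∀ p : G, R p ≃ₐ[k] R' p := fun p =>
    AlgEquiv.ofAlgHom (F p) (B p) (AlgHom.ext (hFB p)) (AlgHom.ext (hBF p)) with hψ
  have hψap : ∀ (p : G) (x : R p), ψ p x = F p x := fun p x => rfl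
  refine ⟨ψ, ?_, ?_, ?_⟩
  · intro p h; rw [hψap, hFι]
  · intro p; rw [hψap, hFy]
  · intro p q x
    -- reduce the linear tensor map to the algebra tensor map
    have hlin : ∀ z : R p ⊗[k] R q,
        TensorProduct.map (ψ p).toLinearMap (ψ q).toLinearMap z
          = Algebra.TensorProduct.map (F p) (F q) z := by
      intro z
      induction z using TensorProduct.induction_on with
      | zero => simp
      | tmul a b => simp [hψap]
      | add u v hu hv => rw [map_add, map_add, hu, hv]
    rw [hlin, hψap]
    -- both sides are algebra maps; check on generators
    refine oreAlgHom_ext (ext.ore (p * q))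
      ((Algebra.TensorProduct.map (F p) (F q)).comp (ext.RR.Δ p q))
      ((ext'.RR.Δ p q).comp (F (p * q))) ?_ ?_ x
    · intro h
      have key : ∀ z : H p ⊗[k] H q,
          Algebra.TensorProduct.map (F p) (F q)
              (TensorProduct.map ((ext.ore p).ι).toLinearMap
                ((ext.ore q).ι).toLinearMap z)
            = TensorProduct.map ((ext'.ore p).ι).toLinearMap
                ((ext'.ore q).ι).toLinearMap
                (TensorProduct.map (φ p).toLinearMap (φ q).toLinearMap z) := by
        intro z
        induction z using TensorProduct.induction_on with
        | zero => simp
        | tmul a b => simp [hFι]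
        | add u v hu hv => rw [map_add, map_add, map_add, map_add, hu, hv]
      rw [AlgHom.comp_apply, AlgHom.comp_apply, ext.compat_Δ, key, hφΔ, hFι,
        ext'.compat_Δ]
    · have hΔd : ext'.RR.Δ p q ((ext'.ore (p * q)).ι (d (p * q)))
          = (ext'.ore p).ι (d p) ⊗ₜ[k] (1 : R' q)
            + (ext'.ore p).ι (r' p) ⊗ₜ[k] (ext'.ore q).ι (d q) := by
        rw [ext'.compat_Δ, hd, map_add, TensorProduct.map_tmul,
          TensorProduct.map_tmul]
        simp
      have hL : ((Algebra.TensorProduct.map (F p) (F q)).comp (ext.RR.Δ p q))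
            ((ext.ore (p * q)).y)
          = ((ext'.ore p).y + (ext'.ore p).ι (d p)) ⊗ₜ[k] (1 : R' q)
            + (ext'.ore p).ι (r' p)
                ⊗ₜ[k] ((ext'.ore q).y + (ext'.ore q).ι (d q)) := by
        rw [AlgHom.comp_apply, hy, map_add, Algebra.TensorProduct.map_tmul,
          Algebra.TensorProduct.map_tmul, hFι, hφr, hFy, hFy, map_one]
      have hR : ((ext'.RR.Δ p q).comp (F (p * q))) ((ext.ore (p * q)).y)
          = ((ext'.ore p).y ⊗ₜ[k] (1 : R' q)
              + (ext'.ore p).ι (r' p) ⊗ₜ[k] (ext'.ore q).y)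
            + ((ext'.ore p).ι (d p) ⊗ₜ[k] (1 : R' q)
              + (ext'.ore p).ι (r' p) ⊗ₜ[k] (ext'.ore q).ι (d q)) := by
        rw [AlgHom.comp_apply, hFy, map_add, hy', hΔd]
      rw [hL, hR, TensorProduct.add_tmul, TensorProduct.tmul_add]
      abel
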